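/- Define F_k = {A ∈ Sym²(ℝⁿ) : σ₁(A) ≥ 0, ..., σ_k(A) ≥ 0}, where σ_j is the j-th elementary symmetric polynomial in the eigenvalues of A. Then the Riesz characteristic sup{p : I - pP_e ∈ F_k for all unit vectors e} equals n/k. -/

import Mathlib

open Matrix

/-- `σ_j(A)`, the `j`-th elementary symmetric function of the eigenvalues of the
symmetric matrix `A` (`0` on non-symmetric matrices). -/
noncomputable def sigmaElem (n j : ℕ) (A : Matrix (Fin n) (Fin n) ℝ) : ℝ :=
  if hA : A.IsHermitian then
    ∑ t ∈ Finset.univ.powersetCard j, ∏ i ∈ t, hA.eigenvalues i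
  else 0

/-- The `k`-th elementary symmetric cone `F_k = {A : σ₁(A) ≥ 0, …, σ_k(A) ≥ 0}`. -/
def Fk (n k : ℕ) : Set (Matrix (Fin n) (Fin n) ℝ) :=
  {A | A.IsHermitian ∧ ∀ j, 1 ≤ j → j ≤ k → 0 ≤ sigmaElem n j A}

section Aux
open Polynomial
set_option synthInstance.maxHeartbeats 1000000
set_option maxHeartbeats 1000000

lemma charpoly_conj_aux {n : ℕ} (U A V : Matrix (Fin n) (Fin n) ℝ)
    (hUV : U * V = 1) : (U * A * V).charpoly = A.charpoly := by
  have hmapUV : U.map C * V.map C = 1 := by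
    rw [← Matrix.map_mul, hUV]; ext i j; simp [Matrix.one_apply]
  have key : charmatrix (U * A * V) = U.map C * charmatrix A * V.map C := by
    unfold charmatrix
    rw [Matrix.mul_sub, Matrix.sub_mul]
    congr 1
    · rw [mul_assoc, (scalar_commute (X : ℝ[X]) (fun r => Commute.all _ _) (V.map C)).eq,
        ← mul_assoc, hmapUV, one_mul]
    · simp only [RingHom.mapMatrix_apply]
      rw [← Matrix.map_mul, ← Matrix.map_mul]
  rw [Matrix.charpoly, Matrix.charpoly, key, det_mul, det_mul, mul_comm,
    ← mul_assoc]
  rw [mul_comm (V.map C).det, ← det_mul, hmapUV, det_one, one_mul]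

lemma charpoly_diagonal_aux {n : ℕ} (d : Fin n → ℝ) :
    (diagonal d).charpoly = ∏ i, (X - C (d i)) := by
  rw [Matrix.charpoly]
  have h : charmatrix (diagonal d) = diagonal fun i => X - C (d i) := by
    ext i j
    rcases eq_or_ne i j with rfl | h
    · simp
    · simp [h, charmatrix_apply_ne _ _ _ h, diagonal_apply_ne _ h]
  rw [h, det_diagonal]

lemma charpoly_hermitian {n : ℕ} (A : Matrix (Fin n) (Fin n) ℝ) (hA : A.IsHermitian) :
    A.charpoly = ∏ i, (X - C (hA.eigenvalues i)) := by
  have hU := (Matrix.mem_unitaryGroup_iff).mp (hA.eigenvectorUnitary).2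
  have h := hA.spectral_theorem
  calc A.charpoly
      = ((hA.eigenvectorUnitary : Matrix (Fin n) (Fin n) ℝ)
          * diagonal (RCLike.ofReal ∘ hA.eigenvalues)
          * (star (hA.eigenvectorUnitary : Matrix (Fin n) (Fin n) ℝ))).charpoly := by
          conv_lhs => rw [h, Unitary.conjStarAlgAut_apply]
    _ = (diagonal (RCLike.ofReal ∘ hA.eigenvalues)).charpoly := charpoly_conj_aux _ _ _ hU
    _ = ∏ i, (X - C (hA.eigenvalues i)) := by
        rw [charpoly_diagonal_aux]
        simp

lemma charpoly_one_sub_smul_vecMulVec {n : ℕ} (hn : 1 ≤ n) (p : ℝ) (e : Fin n → ℝ)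
    (he : ∑ i, e i ^ 2 = 1) :
    ((1 : Matrix (Fin n) (Fin n) ℝ) - p • vecMulVec e e).charpoly
      = (X - C (1 - p)) * (X - 1) ^ (n - 1) := by
  set M := (1 : Matrix (Fin n) (Fin n) ℝ) - p • vecMulVec e e with hMdef
  set φ : ℝ[X] →+* RatFunc ℝ := (algebraMap ℝ[X] (RatFunc ℝ) : ℝ[X] →+* RatFunc ℝ) with hφ
  have hinj : Function.Injective φ := IsFractionRing.injective ℝ[X] (RatFunc ℝ)
  apply hinj
  set c : RatFunc ℝ := φ (X - 1) with hc
  have hcne : c ≠ 0 := by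
    rw [hc]
    intro h
    have : (X - 1 : ℝ[X]) = 0 := hinj (by simpa using h)
    exact (X_sub_C_ne_zero (1 : ℝ)).elim (by simpa using this)
  have h1 : φ M.charpoly = ((charmatrix M).map φ).det := by
    rw [Matrix.charpoly, RingHom.map_det, RingHom.mapMatrix_apply]
  set w : Fin n → RatFunc ℝ := fun i => c⁻¹ * (φ (C p) * φ (C (e i))) with hw
  set v : Fin n → RatFunc ℝ := fun i => φ (C (e i)) with hv
  have hcw : ∀ i, c * w i = φ (C p) * φ (C (e i)) := by
    intro i; simp only [hw]
    rw [← mul_assoc, mul_inv_cancel₀ hcne, one_mul]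
  have h2 : (charmatrix M).map φ
      = c • ((1 : Matrix (Fin n) (Fin n) (RatFunc ℝ)) + vecMulVec w v) := by
    ext i j
    have hsmul : (c • ((1 : Matrix (Fin n) (Fin n) (RatFunc ℝ)) + vecMulVec w v)) i j
        = c * (1 : Matrix (Fin n) (Fin n) (RatFunc ℝ)) i j + (c * w i) * v j := by
      simp [vecMulVec_apply]; ring
    rw [hsmul, hcw]
    rcases eq_or_ne i j with rfl | h
    · simp only [Matrix.map_apply, charmatrix_apply_eq, hMdef, Matrix.sub_apply,
        Matrix.smul_apply, Matrix.one_apply_eq, vecMulVec_apply, smul_eq_mul]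
      rw [show (X : ℝ[X]) - C (1 - p * (e i * e i)) = (X - 1) + C p * C (e i) * C (e i) by
        rw [map_sub C, map_mul C, map_mul C, Polynomial.C_1]; ring]
      rw [map_add φ, map_mul φ, map_mul φ, mul_one]
    · simp only [Matrix.map_apply, charmatrix_apply_ne _ _ _ h, hMdef, Matrix.sub_apply,
        Matrix.smul_apply, Matrix.one_apply_ne h, vecMulVec_apply, smul_eq_mul]
      rw [show (-C ((0:ℝ) - p * (e i * e j)) : ℝ[X]) = C p * C (e i) * C (e j) by
        rw [map_sub C, map_mul C, map_mul C, Polynomial.C_0]; ring]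
      rw [map_mul φ, map_mul φ, mul_zero, zero_add]
  have h3 : ((1 : Matrix (Fin n) (Fin n) (RatFunc ℝ)) + vecMulVec w v).det
      = 1 + c⁻¹ * φ (C p) := by
    rw [vecMulVec_eq (Fin 1), det_one_add_replicateCol_mul_replicateRow]
    have hvw : v ⬝ᵥ w = c⁻¹ * φ (C p) * ∑ i, (φ (C (e i)))^2 := by
      simp only [dotProduct, hw, hv, Finset.mul_sum]
      congr 1; ext i; ring
    rw [hvw]
    have hsum : ∑ i, (φ (C (e i)))^2 = 1 := by
      have h4 : ∑ i, (φ (C (e i)))^2 = φ (C (∑ i, (e i)^2)) := by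
        rw [map_sum C, map_sum φ]
        exact Finset.sum_congr rfl fun i _ => by rw [map_pow, map_pow]
      rw [h4, he]; simp
    rw [hsum, mul_one]
  rw [h1, h2, det_smul, h3, Fintype.card_fin]
  rw [map_mul φ, map_pow φ]
  have hXC : φ (X - C (1 - p)) = c + φ (C p) := by
    rw [hc, ← map_add φ]
    congr 1
    rw [map_sub C, Polynomial.C_1]; ring
  have hX1 : φ ((X : ℝ[X]) - 1) = c := rfl
  rw [hXC, hX1]
  have hn' : n = (n - 1) + 1 := (Nat.succ_pred_eq_of_pos hn).symm
  rw [hn', pow_succ]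
  field_simp
  ring
  rw [Nat.add_sub_cancel_left]

lemma esymm_replicate_one (m j : ℕ) : (Multiset.replicate m (1:ℝ)).esymm j = m.choose j := by
  unfold Multiset.esymm
  have h : ((Multiset.replicate m (1:ℝ)).powersetCard j).map Multiset.prod
      = ((Multiset.replicate m (1:ℝ)).powersetCard j).map (fun _ => (1:ℝ)) := by
    apply Multiset.map_congr rfl
    intro t ht
    obtain ⟨hle, _⟩ := Multiset.mem_powersetCard.mp ht
    exact Multiset.prod_eq_one fun x hx => Multiset.eq_of_mem_replicate (Multiset.mem_of_le hle hx)
  rw [h, Multiset.map_const', Multiset.sum_replicate, Multiset.card_powersetCard,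
    Multiset.card_replicate]
  simp

lemma esymm_cons (a : ℝ) (s : Multiset ℝ) (j : ℕ) :
    (a ::ₘ s).esymm (j+1) = s.esymm (j+1) + a * s.esymm j := by
  unfold Multiset.esymm
  rw [Multiset.powersetCard_cons, Multiset.map_add, Multiset.sum_add, Multiset.map_map]
  congr 1
  rw [show (Multiset.prod ∘ (a ::ₘ ·) : Multiset ℝ → ℝ) = fun t => a * t.prod from
    funext fun t => by simp]
  rw [Multiset.sum_map_mul_left]

lemma cond_iff {n j : ℕ} (hj1 : 1 ≤ j) (hjn : j ≤ n) (p : ℝ) :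
    (0 ≤ ((n-1).choose j : ℝ) + (1 - p) * ((n-1).choose (j-1))) ↔ p ≤ n / j := by
  have hjpos : (0:ℝ) < j := by exact_mod_cast hj1
  have hn1 : 1 ≤ n := le_trans hj1 hjn
  have hnat1 : n * (n-1).choose (j-1) = n.choose j * j := by
    have h1 := Nat.add_one_mul_choose_eq (n-1) (j-1)
    simpa [Nat.succ_eq_add_one, Nat.sub_add_cancel hj1, Nat.sub_add_cancel hn1] using h1
  have hnat2 : n.choose j = (n-1).choose (j-1) + (n-1).choose j := by
    have h2 := Nat.choose_succ_succ (n-1) (j-1)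
    simpa [Nat.succ_eq_add_one, Nat.sub_add_cancel hj1, Nat.sub_add_cancel hn1] using h2
  set a : ℝ := ((n-1).choose (j-1) : ℝ) with ha
  set b : ℝ := ((n-1).choose j : ℝ) with hb
  have hapos : 0 < a := by
    rw [ha]
    exact_mod_cast Nat.choose_pos (by omega : j - 1 ≤ n - 1)
  have keyN : n * ((n-1).choose (j-1)) = ((n-1).choose (j-1) + (n-1).choose j) * j := by
    rw [← hnat2]; exact hnat1
  have key : (n:ℝ) * a = (a + b) * j := by
    rw [ha, hb]
    exact_mod_cast keyN
  rw [le_div_iff₀ hjpos]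
  constructor
  · intro h
    nlinarith
  · intro h
    nlinarith

lemma herm_M {n : ℕ} (p : ℝ) (e : Fin n → ℝ) :
    ((1 : Matrix (Fin n) (Fin n) ℝ) - p • vecMulVec e e).IsHermitian := by
  show _ᴴ = _
  ext i j
  simp only [conjTranspose_apply, Matrix.sub_apply, Matrix.smul_apply, vecMulVec_apply,
    smul_eq_mul, star_sub, star_mul', star_trivial]
  rcases eq_or_ne i j with rfl | h
  · ring
  · rw [Matrix.one_apply_ne h, Matrix.one_apply_ne (Ne.symm h)]; ring

lemma eig_multiset_M {n : ℕ} (hn : 1 ≤ n) (p : ℝ) (e : Fin n → ℝ) (he : ∑ i, e i ^ 2 = 1) :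
    (Finset.univ.val.map (herm_M p e).eigenvalues)
      = (1 - p) ::ₘ Multiset.replicate (n-1) (1:ℝ) := by
  have h1 : ((1 : Matrix (Fin n) (Fin n) ℝ) - p • vecMulVec e e).charpoly
      = ((Finset.univ.val.map (herm_M p e).eigenvalues).map fun a => X - C a).prod := by
    rw [charpoly_hermitian _ (herm_M p e), Finset.prod, Multiset.map_map]
    rfl
  have h2 := charpoly_one_sub_smul_vecMulVec hn p e he
  have h3 : ((((1 : ℝ) - p) ::ₘ Multiset.replicate (n-1) (1:ℝ)).map fun a => X - C a).prod
      = (X - C (1 - p)) * (X - 1) ^ (n - 1) := by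
    rw [Multiset.map_cons, Multiset.prod_cons, Multiset.map_replicate, Multiset.prod_replicate]
    simp
  have h4 := congrArg Polynomial.roots (h1.symm.trans (h2.trans h3.symm))
  rwa [Polynomial.roots_multiset_prod_X_sub_C, Polynomial.roots_multiset_prod_X_sub_C] at h4

lemma sigma_of_M {n : ℕ} (hn : 1 ≤ n) (p : ℝ) (e : Fin n → ℝ) (he : ∑ i, e i ^ 2 = 1)
    {j : ℕ} (hj : 1 ≤ j) :
    sigmaElem n j ((1 : Matrix (Fin n) (Fin n) ℝ) - p • vecMulVec e e)
      = ((n-1).choose j : ℝ) + (1 - p) * ((n-1).choose (j-1)) := by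
  rw [sigmaElem, dif_pos (herm_M p e), ← Finset.esymm_map_val, eig_multiset_M hn p e he]
  obtain ⟨j', rfl⟩ : ∃ j', j = j' + 1 := ⟨j - 1, (Nat.succ_pred_eq_of_pos hj).symm⟩
  rw [esymm_cons, esymm_replicate_one, esymm_replicate_one]
  simp

end Aux

/-- The Riesz characteristic of `F_k` equals `n/k`. -/
theorem riesz_characteristic_Fk (n k : ℕ) (hk1 : 1 ≤ k) (hkn : k ≤ n) :
    sSup {p : ℝ | ∀ e : Fin n → ℝ, (∑ i, e i ^ 2 = 1) →
        ((1 : Matrix (Fin n) (Fin n) ℝ) - p • vecMulVec e e) ∈ Fk n k}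
      = (n : ℝ) / k := by
  have hn : 1 ≤ n := le_trans hk1 hkn
  have hn0 : 0 < n := hn
  have hset : {p : ℝ | ∀ e : Fin n → ℝ, (∑ i, e i ^ 2 = 1) →
      ((1 : Matrix (Fin n) (Fin n) ℝ) - p • vecMulVec e e) ∈ Fk n k}
      = Set.Iic ((n : ℝ) / k) := by
    ext p
    simp only [Set.mem_setOf_eq, Set.mem_Iic]
    constructor
    · intro h
      set e : Fin n → ℝ := fun i => if i = ⟨0, hn0⟩ then 1 else 0 with hedef
      have he : ∑ i, e i ^ 2 = 1 := by
        rw [hedef]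
        simp [ite_pow]
      have h2 := (h e he).2 k hk1 le_rfl
      rw [sigma_of_M hn p e he hk1] at h2
      exact (cond_iff hk1 hkn p).mp h2
    · intro hp e he
      refine ⟨herm_M p e, fun j hj1 hjk => ?_⟩
      rw [sigma_of_M hn p e he hj1]
      refine (cond_iff hj1 (le_trans hjk hkn) p).mpr (le_trans hp ?_)
      exact div_le_div_of_nonneg_left (Nat.cast_nonneg n) (by exact_mod_cast hj1)
        (by exact_mod_cast hjk)
  rw [hset, csSup_Iic]
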